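/- arXiv:1806.09246 — 2 statements merged into one kernel-verified Lean document; each statement's English description precedes it below -/
import Mathlib

section
/- Let v ∈ ℂ^N. Consider all vectors f ∈ ℂ^N of the form f = d·a where d ≥ 0 is real and a ∈ ℂ^N satisfies |a_k| = 1/√N for every k. Then the vector f̂ with entries f̂_k = (‖v‖₁/N)·e^{i·arg(v_k)} is of this form (with d = ‖v‖₁/√N and a_k = (1/√N)e^{i·arg(v_k)}), and for every such f one has ‖v − f̂‖₂ ≤ ‖v − f‖₂; moreover ‖v − f̂‖₂² = ‖v‖₂² − ‖v‖₁²/N. -/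
/-- Solution of the single-RF-chain sub-rate problem (eqs. (29)–(31)): the vector
`f̂` with entries `f̂_k = (‖v‖₁/N)·e^{i·arg(v_k)}` has the form `d·a` with `d ≥ 0`
and `|a_k| = 1/√N`, it minimizes `‖v − f‖₂` over all vectors of this form, and
`‖v − f̂‖₂² = ‖v‖₂² − ‖v‖₁²/N`. -/
theorem stmt7 {N : ℕ} (hN : 0 < N) (v fhat : Fin N → ℂ)
    (hfhat : ∀ k, fhat k =
      ((((∑ j, ‖v j‖) / N : ℝ)) : ℂ) * Complex.exp (Complex.I * ((v k).arg : ℂ))) :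
    (∃ d : ℝ, 0 ≤ d ∧ d = (∑ j, ‖v j‖) / Real.sqrt N ∧
      ∃ a : Fin N → ℂ, (∀ k, ‖a k‖ = 1 / Real.sqrt N) ∧
        (∀ k, a k = ((1 / Real.sqrt N : ℝ) : ℂ) * Complex.exp (Complex.I * ((v k).arg : ℂ))) ∧
        ∀ k, fhat k = (d : ℂ) * a k) ∧
    (∀ d : ℝ, 0 ≤ d → ∀ a : Fin N → ℂ, (∀ k, ‖a k‖ = 1 / Real.sqrt N) →
      Real.sqrt (∑ k, ‖v k - fhat k‖ ^ 2) ≤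
        Real.sqrt (∑ k, ‖v k - (d : ℂ) * a k‖ ^ 2)) ∧
    (∑ k, ‖v k - fhat k‖ ^ 2) =
      (∑ k, ‖v k‖ ^ 2) - (∑ j, ‖v j‖) ^ 2 / N := by
  set s : ℝ := ∑ j, ‖v j‖ with hs
  have hs0 : 0 ≤ s := Finset.sum_nonneg fun j _ => norm_nonneg _
  have hNr : (0:ℝ) < N := by exact_mod_cast hN
  have hsN : (0:ℝ) < Real.sqrt N := Real.sqrt_pos.mpr hNr
  have hss : Real.sqrt N * Real.sqrt N = N := Real.mul_self_sqrt hNr.le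
  have habs : ∀ k, ‖v k - fhat k‖ = |‖v k‖ - s / N| := by
    intro k
    have h1 : v k = (‖v k‖ : ℂ) * Complex.exp (Complex.I * ((v k).arg : ℂ)) := by
      rw [mul_comm Complex.I]; exact (Complex.norm_mul_exp_arg_mul_I (v k)).symm
    rw [hfhat k]
    nth_rewrite 1 [h1]
    rw [← sub_mul, norm_mul, ← Complex.ofReal_sub, Complex.norm_real, Real.norm_eq_abs,
      mul_comm Complex.I, Complex.norm_exp_ofReal_mul_I, mul_one]
  have hsum : (∑ k, ‖v k - fhat k‖ ^ 2) =
      (∑ k, ‖v k‖ ^ 2) - s ^ 2 / N := by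
    have h : ∀ k, ‖v k - fhat k‖ ^ 2 =
        ‖v k‖ ^ 2 - 2 * (s/N) * ‖v k‖ + (s/N)^2 := by
      intro k; rw [habs k, sq_abs]; ring
    calc (∑ k, ‖v k - fhat k‖ ^ 2)
        = (∑ k, ‖v k‖ ^ 2) - 2 * (s/N) * s + N * (s/N)^2 := by
          rw [Finset.sum_congr rfl fun k _ => h k, Finset.sum_add_distrib,
            Finset.sum_sub_distrib, ← Finset.mul_sum, Finset.sum_const, Finset.card_univ,
            Fintype.card_fin, nsmul_eq_mul, ← hs]
      _ = (∑ k, ‖v k‖ ^ 2) - s ^ 2 / N := by field_simp; ring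
  refine ⟨⟨s / Real.sqrt N, div_nonneg hs0 hsN.le, rfl,
    fun k => ((1 / Real.sqrt N : ℝ) : ℂ) * Complex.exp (Complex.I * ((v k).arg : ℂ)),
    ?_, fun k => rfl, ?_⟩, ?_, hsum⟩
  · intro k
    rw [norm_mul, Complex.norm_real, Real.norm_eq_abs, mul_comm Complex.I, Complex.norm_exp_ofReal_mul_I,
      mul_one, abs_of_nonneg (by positivity)]
  · intro k
    rw [hfhat k, ← mul_assoc, ← Complex.ofReal_mul]
    congr 2
    rw [div_mul_div_comm, mul_one, hss]
  · intro d hd a ha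
    apply Real.sqrt_le_sqrt
    rw [hsum]
    have key : ∀ k, (‖v k‖ - d / Real.sqrt N) ^ 2 ≤
        ‖v k - (d:ℂ) * a k‖ ^ 2 := by
      intro k
      have h2 : ‖(d:ℂ) * a k‖ = d / Real.sqrt N := by
        rw [norm_mul, Complex.norm_real, Real.norm_eq_abs, ha k, abs_of_nonneg hd]; ring
      have h1 : |‖v k‖ - d / Real.sqrt N| ≤ ‖v k - (d:ℂ) * a k‖ := by
        rw [← h2]; exact abs_norm_sub_norm_le _ _
      calc (‖v k‖ - d / Real.sqrt N) ^ 2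
          = |‖v k‖ - d / Real.sqrt N| ^ 2 := (sq_abs _).symm
        _ ≤ _ := pow_le_pow_left₀ (abs_nonneg _) h1 2
    have hle : (∑ k, (‖v k‖ - d / Real.sqrt N) ^ 2) ≤
        ∑ k, ‖v k - (d:ℂ) * a k‖ ^ 2 :=
      Finset.sum_le_sum fun k _ => key k
    refine le_trans ?_ hle
    have expand : (∑ k, (‖v k‖ - d / Real.sqrt N) ^ 2)
        = (∑ k, ‖v k‖ ^ 2) - 2 * (d / Real.sqrt N) * s + d ^ 2 := by
      have h : ∀ k, (‖v k‖ - d / Real.sqrt N) ^ 2 =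
          ‖v k‖ ^ 2 - 2 * (d / Real.sqrt N) * ‖v k‖
            + (d / Real.sqrt N) ^ 2 := fun k => by ring
      rw [Finset.sum_congr rfl fun k _ => h k, Finset.sum_add_distrib,
        Finset.sum_sub_distrib, ← Finset.mul_sum, Finset.sum_const, Finset.card_univ,
        Fintype.card_fin, nsmul_eq_mul, ← hs]
      congr 1
      rw [div_pow, Real.sq_sqrt hNr.le]
      field_simp
    rw [expand]
    have h4 : (s / Real.sqrt N) ^ 2 = s ^ 2 / N := by rw [div_pow, Real.sq_sqrt hNr.le]
    have h5 : (d - s / Real.sqrt N) ^ 2 = d ^ 2 - 2 * (d / Real.sqrt N) * s + s ^ 2 / N := by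
      rw [← h4]; ring
    nlinarith [sq_nonneg (d - s / Real.sqrt N), h5]
end

section
/- Let P be an N × N Hermitian positive semidefinite complex matrix with eigenvalues λ₁ ≥ λ₂ ≥ … ≥ λ_N (counted with multiplicity), let c > 0 be real, and let F be an N × k complex matrix with orthonormal columns, i.e. F* F = I_k. Then det(I_k + c · F* P F) is a real number and det(I_k + c · F* P F) ≤ Π_{j=1}^{k} (1 + c·λ_j). -/
open Matrix
open scoped ComplexOrder

open Finset Equiv

private theorem cb_step1 {R : Type*} [CommRing R] {k N : ℕ}
    (A : Matrix (Fin k) (Fin N) R) (B : Matrix (Fin N) (Fin k) R) :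
    det (A * B) = ∑ p : Fin k → Fin N, (∏ i, B (p i) i) * det (A.submatrix id p) := by
  calc det (A * B)
      = ∑ p : Fin k → Fin N, ∑ σ : Perm (Fin k),
          ((Perm.sign σ : ℤ) : R) * ∏ i, A (σ i) (p i) * B (p i) i := by
        simp only [det_apply', mul_apply, Finset.prod_univ_sum, Finset.mul_sum,
          Fintype.piFinset_univ]
        rw [Finset.sum_comm]
    _ = _ := by
        refine Finset.sum_congr rfl fun p _ => ?_
        rw [det_apply', Finset.mul_sum]
        refine Finset.sum_congr rfl fun σ _ => ?_
        simp only [submatrix_apply, id_eq, Finset.prod_mul_distrib]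
        ring

private theorem fin_le_of_strictMono {k N : ℕ} {f : Fin k → Fin N} (hf : StrictMono f)
    (j : Fin k) : (j : ℕ) ≤ (f j : ℕ) := by
  have H : ∀ m (hm : m < k), m ≤ (f ⟨m, hm⟩ : ℕ) := by
    intro m
    induction m with
    | zero => intro _; exact Nat.zero_le _
    | succ m ih =>
      intro hm
      have h1 := ih (Nat.lt_of_succ_lt hm)
      have h2 : f ⟨m, Nat.lt_of_succ_lt hm⟩ < f ⟨m + 1, hm⟩ := hf (by simp [Fin.lt_def])
      exact Nat.succ_le_of_lt (lt_of_le_of_lt h1 h2)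
  simpa using H j.1 j.2

private theorem cauchy_binet {R : Type*} [CommRing R] {k N : ℕ}
    (A : Matrix (Fin k) (Fin N) R) (B : Matrix (Fin N) (Fin k) R) :
    det (A * B) = ∑ f ∈ Finset.univ.filter (fun f : Fin k → Fin N => StrictMono f),
      det (A.submatrix id f) * det (B.submatrix f id) := by
  classical
  rw [cb_step1]
  have h2 : ∑ p : Fin k → Fin N, (∏ i, B (p i) i) * det (A.submatrix id p)
      = ∑ p ∈ Finset.univ.filter (fun p : Fin k → Fin N => Function.Injective p),
          (∏ i, B (p i) i) * det (A.submatrix id p) := by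
    refine (Finset.sum_subset (Finset.filter_subset _ _) fun p _ hp => ?_).symm
    have hinj : ¬ Function.Injective p := by simpa using hp
    rw [Function.Injective] at hinj
    push_neg at hinj
    obtain ⟨i, j, hpij, hij⟩ := hinj
    have : det (A.submatrix id p) = 0 :=
      det_zero_of_column_eq hij (fun l => by simp [hpij])
    rw [this, mul_zero]
  rw [h2]
  have h3 : ∑ p ∈ Finset.univ.filter (fun p : Fin k → Fin N => Function.Injective p),
        (∏ i, B (p i) i) * det (A.submatrix id p)
      = ∑ a ∈ (Finset.univ.filter (fun f : Fin k → Fin N => StrictMono f)) ×ˢ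
            (Finset.univ : Finset (Perm (Fin k))),
          (∏ i, B (a.1 (a.2 i)) i) * det (A.submatrix id (a.1 ∘ a.2)) := by
    refine (Finset.sum_bij
      (fun (a : (Fin k → Fin N) × Perm (Fin k)) _ => (a.1 ∘ a.2 : Fin k → Fin N))
      ?_ ?_ ?_ ?_).symm
    · intro a ha
      have hsm : StrictMono a.1 := by
        simpa using (Finset.mem_product.mp ha).1
      simp only [Finset.mem_filter, Finset.mem_univ, true_and]
      exact hsm.injective.comp a.2.injective
    · intro a ha b hb hab
      have hsa : StrictMono a.1 := by simpa using (Finset.mem_product.mp ha).1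
      have hsb : StrictMono b.1 := by simpa using (Finset.mem_product.mp hb).1
      have hab' : (a.1 ∘ a.2 : Fin k → Fin N) = b.1 ∘ b.2 := hab
      have himg : Finset.univ.image a.1 = Finset.univ.image b.1 := by
        have ha2 : Finset.univ.image (a.1 ∘ a.2) = Finset.univ.image a.1 := by
          rw [← Finset.image_image, Finset.image_univ_equiv]
        have hb2 : Finset.univ.image (b.1 ∘ b.2) = Finset.univ.image b.1 := by
          rw [← Finset.image_image, Finset.image_univ_equiv]
        rw [← ha2, ← hb2, hab']
      have hcard : (Finset.univ.image a.1).card = k := by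
        rw [Finset.card_image_of_injective _ hsa.injective, Finset.card_univ,
          Fintype.card_fin]
      have hfa : a.1 = (Finset.univ.image a.1).orderEmbOfFin hcard :=
        Finset.orderEmbOfFin_unique hcard
          (fun x => Finset.mem_image_of_mem _ (Finset.mem_univ x)) hsa
      have hfb : b.1 = (Finset.univ.image a.1).orderEmbOfFin hcard :=
        Finset.orderEmbOfFin_unique hcard
          (fun x => himg ▸ Finset.mem_image_of_mem _ (Finset.mem_univ x)) hsb
      have hf : a.1 = b.1 := hfa.trans hfb.symm
      have htau : a.2 = b.2 := by
        apply Equiv.ext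
        intro i
        have := congrFun hab' i
        simp only [Function.comp_apply, hf] at this
        exact hsb.injective this
      exact Prod.ext hf htau
    · intro p hp
      have hpinj : Function.Injective p := by simpa using hp
      set s : Finset (Fin N) := Finset.univ.image p with hs
      have hcard : s.card = k := by
        rw [hs, Finset.card_image_of_injective _ hpinj, Finset.card_univ, Fintype.card_fin]
      have hmem : ∀ i, p i ∈ s := fun i => Finset.mem_image_of_mem _ (Finset.mem_univ i)
      set m : Fin k → Fin k := fun i => (s.orderIsoOfFin hcard).symm ⟨p i, hmem i⟩ with hm
      have hminj : Function.Injective m := by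
        intro i j hij
        apply hpinj
        have := congrArg (fun x => ((s.orderIsoOfFin hcard) x : Fin N)) hij
        simpa [hm] using this
      have hmbij := Finite.injective_iff_bijective.mp hminj
      refine ⟨⟨⇑(s.orderEmbOfFin hcard), Equiv.ofBijective m hmbij⟩, ?_, ?_⟩
      · refine Finset.mem_product.mpr ⟨?_, Finset.mem_univ _⟩
        simp only [Finset.mem_filter, Finset.mem_univ, true_and]
        exact (s.orderEmbOfFin hcard).strictMono
      · funext i
        simp only [Function.comp_apply, Equiv.ofBijective_apply, hm]
        rw [← Finset.coe_orderIsoOfFin_apply]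
        simp
    · intro a _
      rfl
  rw [h3, Finset.sum_product]
  refine Finset.sum_congr rfl fun f hf => ?_
  have hsm : StrictMono f := by simpa using hf
  have hsub : ∀ τ : Perm (Fin k), A.submatrix id (f ∘ τ)
      = (A.submatrix id f).submatrix id τ := fun τ => rfl
  calc ∑ τ : Perm (Fin k), (∏ i, B (f (τ i)) i) * det (A.submatrix id (f ∘ τ))
      = ∑ τ : Perm (Fin k), (((Perm.sign τ : ℤ) : R) * ∏ i, B (f (τ i)) i)
          * det (A.submatrix id f) := by
        refine Finset.sum_congr rfl fun τ _ => ?_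
        rw [hsub, det_permute']
        ring
    _ = det (A.submatrix id f) * det (B.submatrix f id) := by
        rw [← Finset.sum_mul, mul_comm]
        congr 1
        rw [det_apply']
        exact Finset.sum_congr rfl fun τ _ => by simp [submatrix_apply]

private theorem key_det {k N : ℕ} (W : Matrix (Fin N) (Fin k) ℂ) (d : Fin N → ℝ) :
    det (Wᴴ * Matrix.diagonal (fun i => (d i : ℂ)) * W) =
      ((∑ f ∈ Finset.univ.filter (fun f : Fin k → Fin N => StrictMono f),
        (∏ i, d (f i)) * Complex.normSq (det (W.submatrix f id)) : ℝ) : ℂ) := by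
  rw [cauchy_binet (Wᴴ * Matrix.diagonal (fun i => (d i : ℂ))) W]
  push_cast
  refine Finset.sum_congr rfl fun f _ => ?_
  have h1 : (Wᴴ * Matrix.diagonal (fun i => (d i : ℂ))).submatrix id f
      = (W.submatrix f id)ᴴ * Matrix.diagonal (fun j => (d (f j) : ℂ)) := by
    ext i j
    simp [Matrix.mul_apply, Matrix.diagonal, Matrix.submatrix, Matrix.conjTranspose_apply,
      Finset.sum_ite_eq, mul_comm]
  rw [h1, det_mul, det_conjTranspose, det_diagonal]
  set z := det (W.submatrix f id)
  rw [show (star z * ∏ j, (d (f j) : ℂ)) * z = (∏ j, (d (f j) : ℂ)) * (z * star z) by ring,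
    Complex.star_def, Complex.mul_conj]

/-- Upper bound on the sub-rate of a semi-unitary precoder: if `P` is Hermitian
positive semidefinite with eigenvalues `λ₁ ≥ … ≥ λ_N` (eigendecomposition
`P = U·diag(λ)·U*` with `U` unitary), `c > 0`, and `F* F = I_k`, then
`det(I_k + c·F* P F)` is real and at most `Π_{j=1}^k (1 + c·λ_j)`. -/
theorem stmt12 {N k : ℕ} (hk : k ≤ N)
    (P : Matrix (Fin N) (Fin N) ℂ) (hP : P.PosSemidef)
    (lam : Fin N → ℝ) (hsort : ∀ i j : Fin N, i ≤ j → lam j ≤ lam i)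
    (U : Matrix (Fin N) (Fin N) ℂ) (hU : U ∈ Matrix.unitaryGroup (Fin N) ℂ)
    (hdecomp : P = U * Matrix.diagonal (fun i => (lam i : ℂ)) * Uᴴ)
    (c : ℝ) (hc : 0 < c)
    (F : Matrix (Fin N) (Fin k) ℂ) (hF : Fᴴ * F = 1) :
    ((1 + (c : ℂ) • (Fᴴ * P * F)).det).im = 0 ∧
    ((1 + (c : ℂ) • (Fᴴ * P * F)).det).re ≤
      ∏ j : Fin k, (1 + c * lam (Fin.castLE hk j)) := by
  have hU2 : U * Uᴴ = 1 := by
    have := Matrix.mem_unitaryGroup_iff.mp hU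
    rwa [Matrix.star_eq_conjTranspose] at this
  have hU1 : Uᴴ * U = 1 := by
    have := Matrix.mem_unitaryGroup_iff'.mp hU
    rwa [Matrix.star_eq_conjTranspose] at this
  have hdiagPSD : (Matrix.diagonal (fun i => (lam i : ℂ))).PosSemidef := by
    have h := hP.conjTranspose_mul_mul_same U
    rw [hdecomp] at h
    have he : Uᴴ * (U * Matrix.diagonal (fun i => (lam i : ℂ)) * Uᴴ) * U
        = Matrix.diagonal (fun i => (lam i : ℂ)) := by
      simp only [← Matrix.mul_assoc]
      rw [hU1, Matrix.one_mul, Matrix.mul_assoc, hU1, Matrix.mul_one]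
    rwa [he] at h
  have hlam0 : ∀ i, 0 ≤ lam i := by
    intro i
    have := Matrix.posSemidef_diagonal_iff.mp hdiagPSD i
    exact_mod_cast Complex.zero_le_real.mp this
  set d : Fin N → ℝ := fun i => 1 + c * lam i with hd
  have hd0 : ∀ i, 0 ≤ d i := fun i => by
    have := hlam0 i
    have := hc.le
    simp only [hd]
    positivity
  set W : Matrix (Fin N) (Fin k) ℂ := Uᴴ * F with hWdef
  have hWH : Wᴴ = Fᴴ * U := by
    rw [hWdef, Matrix.conjTranspose_mul, Matrix.conjTranspose_conjTranspose]
  have hWW : Wᴴ * W = 1 := by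
    rw [hWH, hWdef, Matrix.mul_assoc, ← Matrix.mul_assoc U, hU2, Matrix.one_mul, hF]
  have hdiag : Matrix.diagonal (fun i => (d i : ℂ))
      = 1 + (c : ℂ) • Matrix.diagonal (fun i => (lam i : ℂ)) := by
    ext i j
    rcases eq_or_ne i j with rfl | h
    · simp [hd]
    · simp [Matrix.diagonal_apply_ne _ h, Matrix.one_apply_ne h]
  have hmain : 1 + (c : ℂ) • (Fᴴ * P * F) = Wᴴ * Matrix.diagonal (fun i => (d i : ℂ)) * W := by
    rw [hdiag, hdecomp, hWH, hWdef]
    rw [Matrix.mul_add, Matrix.mul_one, Matrix.add_mul]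
    congr 1
    · rw [Matrix.mul_assoc, ← Matrix.mul_assoc U, hU2, Matrix.one_mul, hF]
    · rw [Matrix.mul_smul, Matrix.smul_mul]
      congr 1
      simp only [Matrix.mul_assoc]
  rw [hmain, key_det]
  have hsum1 : ∑ f ∈ Finset.univ.filter (fun f : Fin k → Fin N => StrictMono f),
      Complex.normSq (det (W.submatrix f id)) = 1 := by
    have h1 := key_det W (fun _ => (1 : ℝ))
    rw [show Matrix.diagonal (fun i : Fin N => (((fun _ => (1:ℝ)) i : ℝ) : ℂ)) = 1 by
        simp, Matrix.mul_one, hWW, Matrix.det_one] at h1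
    simp only [Finset.prod_const_one, one_mul] at h1
    exact_mod_cast h1.symm
  constructor
  · exact Complex.ofReal_im _
  · rw [Complex.ofReal_re]
    have hbound : ∀ f : Fin k → Fin N, StrictMono f →
        (∏ i, d (f i)) ≤ ∏ j : Fin k, d (Fin.castLE hk j) := by
      intro f hf
      refine Finset.prod_le_prod (fun i _ => hd0 _) (fun i _ => ?_)
      have hle : Fin.castLE hk i ≤ f i := by
        rw [Fin.le_def]
        simpa using fin_le_of_strictMono hf i
      have := hsort (Fin.castLE hk i) (f i) hle
      simp only [hd]
      nlinarith
    have hgoal : ∏ j : Fin k, (1 + c * lam (Fin.castLE hk j))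
        = ∏ j : Fin k, d (Fin.castLE hk j) := by
      simp [hd]
    rw [hgoal]
    calc ∑ f ∈ Finset.univ.filter (fun f : Fin k → Fin N => StrictMono f),
          (∏ i, d (f i)) * Complex.normSq (det (W.submatrix f id))
        ≤ ∑ f ∈ Finset.univ.filter (fun f : Fin k → Fin N => StrictMono f),
          (∏ j : Fin k, d (Fin.castLE hk j)) * Complex.normSq (det (W.submatrix f id)) := by
          refine Finset.sum_le_sum fun f hf => ?_
          have hsm : StrictMono f := by simpa using hf
          exact mul_le_mul_of_nonneg_right (hbound f hsm) (Complex.normSq_nonneg _)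
      _ = ∏ j : Fin k, d (Fin.castLE hk j) := by
          rw [← Finset.mul_sum, hsum1, mul_one]
end
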